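/- Single-letterization identity for I(M;Xⁿ) (steps (45)–(62) of the paper): Let M and X_1,…,X_n be random variables with finite ranges on a common probability space, let Q denote the joint law of Xⁿ = (X_1,…,X_n) on 𝒳ⁿ with coordinate marginals Q_1,…,Q_n, and let P be a pmf on 𝒳 with P(x) > 0 for all x. Then I(M; (X_1,…,X_n)) = Σ_{t=1}ⁿ I((M, X_1,…,X_{t−1}); X_t) + Σ_{t=1}ⁿ D(Q_t ‖ P) − D(Q ‖ P^{⊗n}), where P^{⊗n} is the n-fold product of P. In particular, I(M; Xⁿ) ≥ Σ_{t=1}ⁿ I((M, X_1,…,X_{t−1}); X_t) − D(Q ‖ P^{⊗n}). -/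

import Mathlib

/- Single-letterization identity for `I(M;Xⁿ)` (steps (45)–(62) of the paper):
`I(M;Xⁿ) = Σ_t I((M,X^{t−1});X_t) + Σ_t D(Q_t‖P) − D(Q‖P^{⊗n})`, where `Q` is
the law of `Xⁿ`, `Q_t` its coordinate marginals and `P` a strictly positive
pmf on `𝒳`; in particular `I(M;Xⁿ) ≥ Σ_t I((M,X^{t−1});X_t) − D(Q‖P^{⊗n})`.
Natural logarithm, convention `0·log 0 = 0`. -/

/-- Mutual information `I(f(ω); g(ω))` of two finite-range functions of a
finitely distributed random element with law `μ` (natural logarithm). -/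
noncomputable def miFun {Ω A B : Type} [Fintype Ω] [Fintype A] [Fintype B]
    [DecidableEq A] [DecidableEq B] (μ : Ω → ℝ) (f : Ω → A) (g : Ω → B) : ℝ :=
  ∑ a : A, ∑ b : B,
    (∑ ω, if f ω = a ∧ g ω = b then μ ω else 0) *
      Real.log ((∑ ω, if f ω = a ∧ g ω = b then μ ω else 0) /
        ((∑ ω, if f ω = a then μ ω else 0) * (∑ ω, if g ω = b then μ ω else 0)))

/-- `Σ_a q_f(a) log q_f(a)` : negative entropy of the pushforward of `μ` by `f`. -/
noncomputable def nent {Ω A : Type} [Fintype Ω] [Fintype A] [DecidableEq A]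
    (μ : Ω → ℝ) (f : Ω → A) : ℝ :=
  ∑ a : A, (∑ ω, if f ω = a then μ ω else 0) * Real.log (∑ ω, if f ω = a then μ ω else 0)

lemma nent_comp_inj {Ω A B : Type} [Fintype Ω] [Fintype A] [Fintype B] [DecidableEq A] [DecidableEq B]
    (μ : Ω → ℝ) (f : Ω → A) (e : A → B) (he : Function.Injective e) :
    nent μ (fun ω => e (f ω)) = nent μ f := by
  unfold nent
  have h1 : (∑ b : B, (∑ ω, if e (f ω) = b then μ ω else 0) * Real.log (∑ ω, if e (f ω) = b then μ ω else 0))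
      = ∑ b ∈ Finset.univ.image e, (∑ ω, if e (f ω) = b then μ ω else 0) * Real.log (∑ ω, if e (f ω) = b then μ ω else 0) := by
    refine (Finset.sum_subset (Finset.subset_univ _) ?_).symm
    intro b _ hb
    have hz : (∑ ω, if e (f ω) = b then μ ω else 0) = 0 :=
      Finset.sum_eq_zero fun ω _ => if_neg fun h => hb (Finset.mem_image.2 ⟨f ω, Finset.mem_univ _, h⟩)
    rw [hz, zero_mul]
  rw [h1, Finset.sum_image (fun a _ a' _ h => he h)]
  exact Finset.sum_congr rfl fun a _ => by simp only [he.eq_iff]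

lemma kl_split {A : Type} [Fintype A] (q p : A → ℝ) (hq : ∀ a, 0 ≤ q a) (hp : ∀ a, 0 < p a) :
    ∑ a, q a * Real.log (q a / p a)
      = (∑ a, q a * Real.log (q a)) - ∑ a, q a * Real.log (p a) := by
  rw [← Finset.sum_sub_distrib]
  refine Finset.sum_congr rfl fun a _ => ?_
  rcases eq_or_lt_of_le (hq a) with h | h
  · simp [← h]
  · rw [Real.log_div h.ne' (hp a).ne']; ring

lemma gibbs {A : Type} [Fintype A] (q p : A → ℝ) (hq : ∀ a, 0 ≤ q a) (hp : ∀ a, 0 < p a)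
    (hqp : ∑ a, q a = ∑ a, p a) :
    0 ≤ ∑ a, q a * Real.log (q a / p a) := by
  have h : ∀ a : A, q a - p a ≤ q a * Real.log (q a / p a) := by
    intro a
    rcases eq_or_lt_of_le (hq a) with h | h
    · rw [← h]; simpa using (hp a).le
    · have h1 : Real.log (p a / q a) ≤ p a / q a - 1 :=
        Real.log_le_sub_one_of_pos (div_pos (hp a) h)
      have h2 : Real.log (q a / p a) = - Real.log (p a / q a) := by
        rw [← Real.log_inv]; congr 1; field_simp
      have h3 : 1 - p a / q a ≤ Real.log (q a / p a) := by rw [h2]; linarith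
      have h4 : q a * (1 - p a / q a) = q a - p a := by field_simp
      nlinarith [mul_le_mul_of_nonneg_left h3 (hq a)]
  have : ∑ a, (q a - p a) ≤ ∑ a, q a * Real.log (q a / p a) :=
    Finset.sum_le_sum fun a _ => h a
  rw [Finset.sum_sub_distrib, hqp] at this
  linarith

lemma sum_ite_marg {Ω A : Type} [Fintype Ω] [Fintype A] [DecidableEq A] (μ : Ω → ℝ) (f : Ω → A) :
    ∑ a : A, (∑ ω, if f ω = a then μ ω else 0) = ∑ ω, μ ω := by
  rw [Finset.sum_comm]
  exact Finset.sum_congr rfl fun ω _ => by simp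

lemma miFun_eq {Ω A B : Type} [Fintype Ω] [Fintype A] [Fintype B] [DecidableEq A] [DecidableEq B]
    (μ : Ω → ℝ) (hμ0 : ∀ ω, 0 ≤ μ ω) (f : Ω → A) (g : Ω → B) :
    miFun μ f g = nent μ (fun ω => (f ω, g ω)) - nent μ f - nent μ g := by
  have hmargA : ∀ a, (∑ b : B, ∑ ω, if f ω = a ∧ g ω = b then μ ω else 0)
      = ∑ ω, if f ω = a then μ ω else 0 := by
    intro a
    rw [Finset.sum_comm]
    refine Finset.sum_congr rfl fun ω _ => ?_
    by_cases h : f ω = a <;> simp [h]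
  have hmargB : ∀ b, (∑ a : A, ∑ ω, if f ω = a ∧ g ω = b then μ ω else 0)
      = ∑ ω, if g ω = b then μ ω else 0 := by
    intro b
    rw [Finset.sum_comm]
    refine Finset.sum_congr rfl fun ω _ => ?_
    by_cases h : g ω = b <;> simp [h, and_comm]
  have key : ∀ a b,
      (∑ ω, if f ω = a ∧ g ω = b then μ ω else 0) *
        Real.log ((∑ ω, if f ω = a ∧ g ω = b then μ ω else 0) /
          ((∑ ω, if f ω = a then μ ω else 0) * (∑ ω, if g ω = b then μ ω else 0)))
      = (∑ ω, if f ω = a ∧ g ω = b then μ ω else 0) * Real.log (∑ ω, if f ω = a ∧ g ω = b then μ ω else 0)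
        - (∑ ω, if f ω = a ∧ g ω = b then μ ω else 0) * Real.log (∑ ω, if f ω = a then μ ω else 0)
        - (∑ ω, if f ω = a ∧ g ω = b then μ ω else 0) * Real.log (∑ ω, if g ω = b then μ ω else 0) := by
    intro a b
    set pab := ∑ ω, if f ω = a ∧ g ω = b then μ ω else 0 with hpab
    set pa := ∑ ω, if f ω = a then μ ω else 0 with hpa
    set pb := ∑ ω, if g ω = b then μ ω else 0 with hpb
    have h0 : 0 ≤ pab := Finset.sum_nonneg fun ω _ => by
      by_cases h : f ω = a ∧ g ω = b <;> simp [h, hμ0 ω]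
    rcases eq_or_lt_of_le h0 with h | h
    · simp [← h]
    · have hpa' : pab ≤ pa := Finset.sum_le_sum fun ω _ => by
        by_cases hf : f ω = a <;> by_cases hg : g ω = b <;> simp [hf, hg, hμ0 ω]
      have hpb' : pab ≤ pb := Finset.sum_le_sum fun ω _ => by
        by_cases hf : f ω = a <;> by_cases hg : g ω = b <;> simp [hf, hg, hμ0 ω]
      have hpa0 : 0 < pa := lt_of_lt_of_le h hpa'
      have hpb0 : 0 < pb := lt_of_lt_of_le h hpb'
      rw [Real.log_div h.ne' (by positivity), Real.log_mul hpa0.ne' hpb0.ne']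
      ring
  unfold miFun nent
  rw [Fintype.sum_prod_type]
  simp only [Prod.mk.injEq]
  calc (∑ a, ∑ b, (∑ ω, if f ω = a ∧ g ω = b then μ ω else 0) *
        Real.log ((∑ ω, if f ω = a ∧ g ω = b then μ ω else 0) /
          ((∑ ω, if f ω = a then μ ω else 0) * (∑ ω, if g ω = b then μ ω else 0))))
      = ∑ a, ∑ b,
        ((∑ ω, if f ω = a ∧ g ω = b then μ ω else 0) * Real.log (∑ ω, if f ω = a ∧ g ω = b then μ ω else 0)
        - (∑ ω, if f ω = a ∧ g ω = b then μ ω else 0) * Real.log (∑ ω, if f ω = a then μ ω else 0)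
        - (∑ ω, if f ω = a ∧ g ω = b then μ ω else 0) * Real.log (∑ ω, if g ω = b then μ ω else 0)) :=
        Finset.sum_congr rfl fun a _ => Finset.sum_congr rfl fun b _ => key a b
    _ = (∑ a, ∑ b, (∑ ω, if f ω = a ∧ g ω = b then μ ω else 0) * Real.log (∑ ω, if f ω = a ∧ g ω = b then μ ω else 0))
        - (∑ a, ∑ b, (∑ ω, if f ω = a ∧ g ω = b then μ ω else 0) * Real.log (∑ ω, if f ω = a then μ ω else 0))
        - (∑ a, ∑ b, (∑ ω, if f ω = a ∧ g ω = b then μ ω else 0) * Real.log (∑ ω, if g ω = b then μ ω else 0)) := by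
        simp [Finset.sum_sub_distrib]
    _ = (∑ a, ∑ b, (∑ ω, if f ω = a ∧ g ω = b then μ ω else 0) * Real.log (∑ ω, if f ω = a ∧ g ω = b then μ ω else 0))
        - (∑ a, (∑ ω, if f ω = a then μ ω else 0) * Real.log (∑ ω, if f ω = a then μ ω else 0))
        - (∑ b, (∑ ω, if g ω = b then μ ω else 0) * Real.log (∑ ω, if g ω = b then μ ω else 0)) := by
        congr 1
        · congr 1
          refine Finset.sum_congr rfl fun a _ => ?_
          rw [← Finset.sum_mul, hmargA a]
        · rw [Finset.sum_comm]
          refine Finset.sum_congr rfl fun b _ => ?_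
          rw [← Finset.sum_mul, hmargB b]

noncomputable def Nent {M X : Type} [Fintype M] [Fintype X] [DecidableEq M] [DecidableEq X]
    (n : ℕ) (μ : M × (Fin n → X) → ℝ) (t : ℕ) : ℝ :=
  nent μ (fun ω => (ω.1, fun s : Fin (min t n) => ω.2 (Fin.castLE (min_le_right t n) s)))

section
variable {M X : Type} [Fintype M] [Fintype X] [DecidableEq M] [DecidableEq X]
  (n : ℕ) (μ : M × (Fin n → X) → ℝ)

lemma Nent_zero : Nent n μ 0 = nent μ Prod.fst := by
  have he : Function.Injective (fun m : M => ((m, fun s : Fin (min 0 n) => (absurd s.2 (by omega) : X)) : M × (Fin (min 0 n) → X))) :=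
    fun a b h => congrArg Prod.fst h
  rw [← nent_comp_inj μ Prod.fst _ he]
  unfold Nent
  congr 1
  funext ω
  refine Prod.ext rfl ?_
  funext s
  exact absurd s.2 (by omega)

lemma Nent_top : Nent n μ n = nent μ (fun ω => (ω.1, ω.2)) := by
  have he : Function.Injective (fun p : M × (Fin n → X) =>
      ((p.1, fun s : Fin (min n n) => p.2 ⟨s.val, by omega⟩) : M × (Fin (min n n) → X))) := by
    intro p p' h
    simp only [Prod.mk.injEq] at h
    obtain ⟨h1, h2⟩ := h
    refine Prod.ext h1 (funext fun j => ?_)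
    have := congrFun h2 (⟨j.val, by omega⟩ : Fin (min n n))
    simpa using this
  rw [← nent_comp_inj μ (fun ω => (ω.1, ω.2)) _ he]
  rfl

lemma Nent_mid (t : Fin n) :
    nent μ (fun ω => (ω.1, fun s : Fin t.val => ω.2 (Fin.castLE t.isLt.le s)))
      = Nent n μ t.val := by
  have ht := t.isLt
  have he : Function.Injective (fun p : M × (Fin t.val → X) =>
      ((p.1, fun s : Fin (min t.val n) => p.2 ⟨s.val, by omega⟩) : M × (Fin (min t.val n) → X))) := by
    intro p p' h
    simp only [Prod.mk.injEq] at h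
    obtain ⟨h1, h2⟩ := h
    refine Prod.ext h1 (funext fun j => ?_)
    have := congrFun h2 (⟨j.val, by omega⟩ : Fin (min t.val n))
    simpa using this
  rw [← nent_comp_inj μ (fun ω => (ω.1, fun s : Fin t.val => ω.2 (Fin.castLE t.isLt.le s))) _ he]
  rfl

lemma Nent_succ (t : Fin n) :
    nent μ (fun ω => ((ω.1, fun s : Fin t.val => ω.2 (Fin.castLE t.isLt.le s)), ω.2 t))
      = Nent n μ (t.val + 1) := by
  have ht := t.isLt
  have he : Function.Injective (fun p : (M × (Fin t.val → X)) × X =>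
      ((p.1.1, fun s : Fin (min (t.val + 1) n) =>
        if h : s.val < t.val then p.1.2 ⟨s.val, h⟩ else p.2) : M × (Fin (min (t.val + 1) n) → X))) := by
    intro p p' h
    simp only [Prod.mk.injEq] at h
    obtain ⟨h1, h2⟩ := h
    have hx : p.2 = p'.2 := by
      have := congrFun h2 (⟨t.val, by omega⟩ : Fin (min (t.val + 1) n))
      simpa using this
    have hv : p.1.2 = p'.1.2 := funext fun j => by
      have := congrFun h2 (⟨j.val, by omega⟩ : Fin (min (t.val + 1) n))
      simpa [dif_pos j.isLt] using this
    exact Prod.ext (Prod.ext h1 hv) hx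
  rw [← nent_comp_inj μ (fun ω => ((ω.1, fun s : Fin t.val => ω.2 (Fin.castLE t.isLt.le s)), ω.2 t)) _ he]
  unfold Nent
  congr 1
  funext ω
  refine Prod.ext rfl ?_
  funext s
  by_cases h : s.val < t.val
  · simp only [dif_pos h]
    rfl
  · simp only [dif_neg h]
    have hs : s.val = t.val := by have := s.2; omega
    have : t = Fin.castLE (min_le_right (t.val + 1) n) s := by
      refine Fin.ext ?_
      simp only [Fin.coe_castLE]
      omega
    exact congrArg ω.2 this

end

lemma prod_kl {M X : Type} [Fintype M] [Fintype X] [DecidableEq M] [DecidableEq X]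
    (n : ℕ) (μ : M × (Fin n → X) → ℝ) (hμ0 : ∀ ω, 0 ≤ μ ω)
    (P : X → ℝ) (hP0 : ∀ x, 0 < P x) :
    ∑ xs : Fin n → X, (∑ m, μ (m, xs)) * Real.log ((∑ m, μ (m, xs)) / ∏ t, P (xs t))
      = nent μ Prod.snd
        - ∑ t : Fin n, ∑ x : X,
            (∑ ω, if ω.2 t = x then μ ω else 0) * Real.log (P x) := by
  have hq' : ∀ xs : Fin n → X, (∑ m, μ (m, xs)) = ∑ ω, if Prod.snd ω = xs then μ ω else 0 := by
    intro xs
    rw [Fintype.sum_prod_type]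
    exact (Finset.sum_congr rfl fun m _ => by simp).symm
  simp only [hq']
  rw [kl_split (fun xs => ∑ ω, if Prod.snd ω = xs then μ ω else 0) (fun xs => ∏ t, P (xs t))
    (fun xs => Finset.sum_nonneg fun ω _ => by by_cases h : Prod.snd ω = xs <;> simp [h, hμ0 ω])
    (fun xs => Finset.prod_pos fun t _ => hP0 _)]
  have h1 : (∑ xs : Fin n → X, (∑ ω, if Prod.snd ω = xs then μ ω else 0) * Real.log (∑ ω, if Prod.snd ω = xs then μ ω else 0))
      = nent μ Prod.snd := rfl
  rw [h1]
  congr 1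
  have hlog : ∀ xs : Fin n → X, Real.log (∏ t, P (xs t)) = ∑ t, Real.log (P (xs t)) :=
    fun xs => Real.log_prod fun t _ => (hP0 _).ne'
  calc (∑ xs : Fin n → X, (∑ ω, if Prod.snd ω = xs then μ ω else 0) * Real.log (∏ t, P (xs t)))
      = ∑ xs : Fin n → X, ∑ t : Fin n, (∑ ω, if Prod.snd ω = xs then μ ω else 0) * Real.log (P (xs t)) := by
        refine Finset.sum_congr rfl fun xs _ => ?_
        rw [hlog, Finset.mul_sum]
    _ = ∑ t : Fin n, ∑ xs : Fin n → X, (∑ ω, if Prod.snd ω = xs then μ ω else 0) * Real.log (P (xs t)) :=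
        Finset.sum_comm
    _ = ∑ t : Fin n, ∑ x : X, (∑ ω, if ω.2 t = x then μ ω else 0) * Real.log (P x) := by
        refine Finset.sum_congr rfl fun t _ => ?_
        have hl : (∑ xs : Fin n → X, (∑ ω, if Prod.snd ω = xs then μ ω else 0) * Real.log (P (xs t)))
            = ∑ ω, μ ω * Real.log (P (ω.2 t)) := by
          simp only [Finset.sum_mul]
          rw [Finset.sum_comm]
          refine Finset.sum_congr rfl fun ω _ => ?_
          simp [ite_mul]
        have hr : (∑ x : X, (∑ ω, if ω.2 t = x then μ ω else 0) * Real.log (P x))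
            = ∑ ω, μ ω * Real.log (P (ω.2 t)) := by
          simp only [Finset.sum_mul]
          rw [Finset.sum_comm]
          refine Finset.sum_congr rfl fun ω _ => ?_
          simp [ite_mul]
        rw [hl, hr]

set_option maxHeartbeats 2000000 in
theorem single_letterization_identity
    {M X : Type} [Fintype M] [Fintype X] [DecidableEq M] [DecidableEq X]
    [Nonempty M] [Nonempty X] (n : ℕ)
    -- μ is the joint law of (M, Xⁿ)
    (μ : M × (Fin n → X) → ℝ) (hμ0 : ∀ ω, 0 ≤ μ ω) (hμ1 : ∑ ω, μ ω = 1)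
    (P : X → ℝ) (hP0 : ∀ x, 0 < P x) (hP1 : ∑ x, P x = 1) :
    -- the identity
    (miFun μ Prod.fst Prod.snd
      = (∑ t : Fin n,
          miFun μ (fun ω => (ω.1, fun s : Fin t.val => ω.2 (Fin.castLE t.isLt.le s)))
            (fun ω => ω.2 t))
        + (∑ t : Fin n, ∑ x : X,
            (∑ ω, if ω.2 t = x then μ ω else 0) *
              Real.log ((∑ ω, if ω.2 t = x then μ ω else 0) / P x))
        - (∑ xs : Fin n → X,
            (∑ m, μ (m, xs)) * Real.log ((∑ m, μ (m, xs)) / ∏ t, P (xs t))))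
    ∧
    -- in particular, the lower bound on I(M;Xⁿ)
    ((∑ t : Fin n,
          miFun μ (fun ω => (ω.1, fun s : Fin t.val => ω.2 (Fin.castLE t.isLt.le s)))
            (fun ω => ω.2 t))
        - (∑ xs : Fin n → X,
            (∑ m, μ (m, xs)) * Real.log ((∑ m, μ (m, xs)) / ∏ t, P (xs t)))
      ≤ miFun μ Prod.fst Prod.snd) := by
  -- per-coordinate marginal facts
  have hq0 : ∀ (t : Fin n) (x : X), 0 ≤ ∑ ω, if ω.2 t = x then μ ω else 0 :=
    fun t x => Finset.sum_nonneg fun ω _ => by by_cases h : ω.2 t = x <;> simp [h, hμ0 ω]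
  have hq1 : ∀ t : Fin n, (∑ x : X, ∑ ω, if ω.2 t = x then μ ω else 0) = 1 :=
    fun t => (sum_ite_marg μ (fun ω => ω.2 t)).trans hμ1
  -- step decomposition of each mutual-information term
  have hIt : ∀ t : Fin n,
      miFun μ (fun ω => (ω.1, fun s : Fin t.val => ω.2 (Fin.castLE t.isLt.le s))) (fun ω => ω.2 t)
        = Nent n μ (t.val + 1) - Nent n μ t.val - nent μ (fun ω => ω.2 t) := by
    intro t
    refine (miFun_eq μ hμ0 _ _).trans ?_
    show nent μ (fun ω => ((ω.1, fun s : Fin t.val => ω.2 (Fin.castLE t.isLt.le s)), ω.2 t))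
        - nent μ (fun ω => (ω.1, fun s : Fin t.val => ω.2 (Fin.castLE t.isLt.le s)))
        - nent μ (fun ω => ω.2 t) = _
    rw [Nent_succ n μ t, Nent_mid n μ t]
  -- the chain-rule sum telescopes
  have hSum : (∑ t : Fin n,
      miFun μ (fun ω => (ω.1, fun s : Fin t.val => ω.2 (Fin.castLE t.isLt.le s))) (fun ω => ω.2 t))
      = Nent n μ n - Nent n μ 0 - ∑ t : Fin n, nent μ (fun ω => ω.2 t) := by
    rw [Finset.sum_congr rfl fun t _ => hIt t, Finset.sum_sub_distrib]
    congr 1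
    rw [Fin.sum_univ_eq_sum_range (fun i => Nent n μ (i + 1) - Nent n μ i) n]
    exact Finset.sum_range_sub (fun i => Nent n μ i) n
  -- per-coordinate divergence terms
  have hD : (∑ t : Fin n, ∑ x : X,
        (∑ ω, if ω.2 t = x then μ ω else 0) *
          Real.log ((∑ ω, if ω.2 t = x then μ ω else 0) / P x))
      = (∑ t : Fin n, nent μ (fun ω => ω.2 t))
        - ∑ t : Fin n, ∑ x : X, (∑ ω, if ω.2 t = x then μ ω else 0) * Real.log (P x) := by
    rw [← Finset.sum_sub_distrib]
    refine Finset.sum_congr rfl fun t _ => ?_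
    rw [kl_split (fun x => ∑ ω, if ω.2 t = x then μ ω else 0) P (hq0 t) hP0]
    rfl
  have hmain : miFun μ Prod.fst Prod.snd
      = (∑ t : Fin n,
          miFun μ (fun ω => (ω.1, fun s : Fin t.val => ω.2 (Fin.castLE t.isLt.le s)))
            (fun ω => ω.2 t))
        + (∑ t : Fin n, ∑ x : X,
            (∑ ω, if ω.2 t = x then μ ω else 0) *
              Real.log ((∑ ω, if ω.2 t = x then μ ω else 0) / P x))
        - (∑ xs : Fin n → X,
            (∑ m, μ (m, xs)) * Real.log ((∑ m, μ (m, xs)) / ∏ t, P (xs t))) := by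
    rw [miFun_eq μ hμ0 Prod.fst Prod.snd, hSum, hD, prod_kl n μ hμ0 P hP0,
      Nent_zero n μ, Nent_top n μ]
    ring
  refine ⟨hmain, ?_⟩
  have hDt0 : 0 ≤ ∑ t : Fin n, ∑ x : X,
      (∑ ω, if ω.2 t = x then μ ω else 0) *
        Real.log ((∑ ω, if ω.2 t = x then μ ω else 0) / P x) := by
    refine Finset.sum_nonneg fun t _ => ?_
    exact gibbs (fun x => ∑ ω, if ω.2 t = x then μ ω else 0) P (hq0 t) hP0 (by rw [hq1 t, hP1])
  linarith [hmain]
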